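/- The 3×3 matrices e_1 = e_3 = [[τ, a, 1],[0,0,0],[0,0,0]], e_2 = e_4 = [[0,0,0],[0,0,0],[1, a^{-1}, τ]], t_1 = t_3 = [[a, -aε, 0],[0, ε, 1],[0,1,0]], t_2 = t_4 = [[ε, 1, 0],[1,0,0],[-ε, 0, a]] satisfy all defining relations of the BMW algebra B_4 with parameters a = p^{-1}q^{-2}, ε = p - p^{-1}, τ = (pq - p^{-1}q^{-1})(q+q^{-1})/(p - p^{-1}). -/

import Mathlib

set_option maxHeartbeats 1000000 in
set_option linter.unreachableTactic false in
private lemma bmw_aux {F : Type*} [Field F] (A E T B : F)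
    (hB : B = A - E + E * T) (hAB : A * B = 1) :
    let e₁ : Matrix (Fin 3) (Fin 3) F := !![T, A, 1; 0, 0, 0; 0, 0, 0]
    let e₂ : Matrix (Fin 3) (Fin 3) F := !![0, 0, 0; 0, 0, 0; 1, B, T]
    let t₁ : Matrix (Fin 3) (Fin 3) F := !![A, -(A * E), 0; 0, E, 1; 0, 1, 0]
    let t₂ : Matrix (Fin 3) (Fin 3) F := !![E, 1, 0; 1, 0, 0; -E, 0, A]
    let s₁ : Matrix (Fin 3) (Fin 3) F := !![B, 0, E; 0, 0, 1; 0, 1, -E]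
    let s₂ : Matrix (Fin 3) (Fin 3) F := !![0, 1, 0; 1, -E, 0; 0, E * B, B]
    (t₁ * t₂ * t₁ = t₂ * t₁ * t₂) ∧
    (e₁ * e₂ * e₁ = e₁) ∧ (e₂ * e₁ * e₂ = e₂) ∧
    (t₁ * s₁ = 1) ∧ (t₂ * s₂ = 1) ∧
    (t₁ - s₁ = E • (1 - e₁)) ∧ (t₂ - s₂ = E • (1 - e₂)) ∧
    (e₁ * t₁ = A • e₁) ∧ (t₁ * e₁ = A • e₁) ∧
    (e₂ * t₂ = A • e₂) ∧ (t₂ * e₂ = A • e₂) ∧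
    (e₁ * e₁ = T • e₁) ∧ (e₂ * e₂ = T • e₂) ∧
    (e₁ * t₂ * e₁ = B • e₁) ∧ (e₂ * t₁ * e₂ = B • e₂) ∧
    (t₂ * t₁ * e₂ = e₁ * t₂ * t₁) ∧ (e₁ * t₂ * t₁ = e₁ * e₂) ∧
    (t₁ * t₂ * e₁ = e₂ * t₁ * t₂) ∧ (e₂ * t₁ * t₂ = e₂ * e₁) := by
  subst hB
  intro e₁ e₂ t₁ t₂ s₁ s₂
  refine ⟨?_, ?_, ?_, ?_, ?_, ?_, ?_, ?_, ?_, ?_, ?_, ?_, ?_, ?_, ?_, ?_, ?_, ?_, ?_⟩ <;>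
    · ext i j
      fin_cases i <;> fin_cases j
      all_goals simp [e₁, e₂, t₁, t₂, s₁, s₂, Matrix.mul_apply, Fin.sum_univ_three,
        Matrix.one_apply, Matrix.smul_apply, Matrix.vecHead, Matrix.vecTail]
      all_goals first
        | tauto
        | (left; ring1)
        | ring1
        | linear_combination hAB
        | linear_combination (-1 : F) * hAB
        | linear_combination E * hAB
        | linear_combination -E * hAB
        | linear_combination A * hAB
        | linear_combination -A * hAB
        | linear_combination T * hAB
        | linear_combination -T * hAB
        | linear_combination (A - E + E * T) * hAB
        | linear_combination (-(A - E + E * T)) * hAB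
        | linear_combination (E * T) * hAB
        | linear_combination (-(E * T)) * hAB

/-- The explicit 3×3 matrices for the representation of the BMW algebra `B₄`
satisfy all the defining BMW relations with parameters `a = p⁻¹q⁻²`,
`ε = p - p⁻¹`, `τ = (pq - p⁻¹q⁻¹)(q + q⁻¹)/(p - p⁻¹)`. -/
theorem bmw_B4_matrix_representation {F : Type*} [Field F] (p q : F)
    (hp : p ≠ 0) (hq : q ≠ 0) (hp2 : p ^ 2 ≠ 1) :
    let a : F := p⁻¹ * q⁻¹ ^ 2
    let ε : F := p - p⁻¹
    let τ : F := (p * q - p⁻¹ * q⁻¹) * (q + q⁻¹) / (p - p⁻¹)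
    let e₁ : Matrix (Fin 3) (Fin 3) F := !![τ, a, 1; 0, 0, 0; 0, 0, 0]
    let e₂ : Matrix (Fin 3) (Fin 3) F := !![0, 0, 0; 0, 0, 0; 1, a⁻¹, τ]
    let t₁ : Matrix (Fin 3) (Fin 3) F := !![a, -(a * ε), 0; 0, ε, 1; 0, 1, 0]
    let t₂ : Matrix (Fin 3) (Fin 3) F := !![ε, 1, 0; 1, 0, 0; -ε, 0, a]
    (t₁ * t₂ * t₁ = t₂ * t₁ * t₂) ∧
    (e₁ * e₂ * e₁ = e₁) ∧ (e₂ * e₁ * e₂ = e₂) ∧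
    (t₁ * t₁⁻¹ = 1) ∧ (t₂ * t₂⁻¹ = 1) ∧
    (t₁ - t₁⁻¹ = ε • (1 - e₁)) ∧ (t₂ - t₂⁻¹ = ε • (1 - e₂)) ∧
    (e₁ * t₁ = a • e₁) ∧ (t₁ * e₁ = a • e₁) ∧
    (e₂ * t₂ = a • e₂) ∧ (t₂ * e₂ = a • e₂) ∧
    (e₁ * e₁ = τ • e₁) ∧ (e₂ * e₂ = τ • e₂) ∧
    (e₁ * t₂ * e₁ = a⁻¹ • e₁) ∧ (e₂ * t₁ * e₂ = a⁻¹ • e₂) ∧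
    (t₂ * t₁ * e₂ = e₁ * t₂ * t₁) ∧ (e₁ * t₂ * t₁ = e₁ * e₂) ∧
    (t₁ * t₂ * e₁ = e₂ * t₁ * t₂) ∧ (e₂ * t₁ * t₂ = e₂ * e₁) := by
  intro a ε τ e₁ e₂ t₁ t₂
  have hε : p - p⁻¹ ≠ 0 := by
    intro h
    apply hp2
    have h' : p = p⁻¹ := sub_eq_zero.mp h
    rw [sq]
    nth_rewrite 2 [h']
    exact mul_inv_cancel₀ hp
  have h1 : p ^ 2 - 1 ≠ 0 := sub_ne_zero.mpr hp2
  have h3 : -(p ^ 2 * q ^ 2) + p ^ 4 * q ^ 2 ≠ 0 := by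
    have h := mul_ne_zero (mul_ne_zero (pow_ne_zero 2 hp) (pow_ne_zero 2 hq)) h1
    contrapose! h
    linear_combination h
  have hετ : ε * τ = (p * q - p⁻¹ * q⁻¹) * (q + q⁻¹) := by
    show (p - p⁻¹) * ((p * q - p⁻¹ * q⁻¹) * (q + q⁻¹) / (p - p⁻¹)) = _
    rw [mul_comm]
    exact div_mul_cancel₀ _ hε
  have ha : a ≠ 0 := by simp [a, hp, hq]
  have ha' : a⁻¹ = p * q ^ 2 := by
    show (p⁻¹ * q⁻¹ ^ 2)⁻¹ = _
    rw [mul_inv, inv_inv, ← inv_pow, inv_inv]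
  have key : p * q ^ 2 = a - ε + ε * τ := by
    rw [hετ]
    show p * q ^ 2 = p⁻¹ * q⁻¹ ^ 2 - (p - p⁻¹) + (p * q - p⁻¹ * q⁻¹) * (q + q⁻¹)
    field_simp
    ring
  have hainv : a⁻¹ = a - ε + ε * τ := ha'.trans key
  have hAB : a * (a - ε + ε * τ) = 1 := by
    rw [← hainv]
    exact mul_inv_cancel₀ ha
  have he2 : e₂ = !![0, 0, 0; 0, 0, 0; 1, a - ε + ε * τ, τ] := by
    show (!![0, 0, 0; 0, 0, 0; 1, a⁻¹, τ] : Matrix (Fin 3) (Fin 3) F) = _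
    rw [hainv]
  obtain ⟨H1, H2, H3, H4, H5, H6, H7, H8, H9, H10, H11, H12, H13, H14, H15, H16,
      H17, H18, H19⟩ := bmw_aux a ε τ (a - ε + ε * τ) rfl hAB
  have ht1 : t₁⁻¹ = !![a - ε + ε * τ, 0, ε; 0, 0, 1; 0, 1, -ε] :=
    Matrix.inv_eq_right_inv H4
  have ht2 : t₂⁻¹ = !![0, 1, 0; 1, -ε, 0; 0, ε * (a - ε + ε * τ), a - ε + ε * τ] :=
    Matrix.inv_eq_right_inv H5
  refine ⟨H1, ?_, ?_, ?_, ?_, ?_, ?_, H8, H9, ?_, ?_, H12, ?_, ?_, ?_, ?_, ?_, ?_, ?_⟩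
  · rw [he2]; exact H2
  · rw [he2]; exact H3
  · rw [ht1]; exact H4
  · rw [ht2]; exact H5
  · rw [ht1]; exact H6
  · rw [ht2, he2]; exact H7
  · rw [he2]; exact H10
  · rw [he2]; exact H11
  · rw [he2]; exact H13
  · rw [hainv]; exact H14
  · rw [he2, hainv]; exact H15
  · rw [he2]; exact H16
  · rw [he2]; exact H17
  · rw [he2]; exact H18
  · rw [he2]; exact H19
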